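/- Let n ≥ 2, let S₁,…,Sₙ be a Cuntz family of order n on a complex Hilbert space H, let z be a unit vector in V_{n,m}, and let Ω ∈ H be a unit vector with s(z)Ω = Ω. If the linear span of {S_J S_K* Ω : J, K words over {1,…,n}} is dense in H, then already the linear span of {S_J Ω : J a word over {1,…,n}} is dense in H. -/

import Mathlib

noncomputable section

/-- `Vnm n m` is the Hilbert space `ℓ²({1,…,n}^m)`, identified with `(ℂ^n)^{⊗m}`. -/
abbrev Vnm (n m : ℕ) : Type := EuclideanSpace ℂ (Fin m → Fin n)

/-- The tensor product `x ⊗ y`, via `(x ⊗ y)_{JK} = x_J y_K`. -/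
def tensV {n m l : ℕ} (x : Vnm n m) (y : Vnm n l) : Vnm n (m + l) :=
  WithLp.toLp 2 <| fun J => x (fun i => J (Fin.castAdd l i)) * y (fun i => J (Fin.natAdd m i))

/-- Re-indexing of a tensor along an equality of lengths. -/
def castV {n m m' : ℕ} (h : m = m') (z : Vnm n m) : Vnm n m' :=
  WithLp.toLp 2 <| fun J => z (fun i => J (Fin.cast h i))

/-- The tensor power `x^{⊗p}`. -/
def tpowV {n m : ℕ} (x : Vnm n m) (p : ℕ) : Vnm n (p * m) :=
  WithLp.toLp 2 <| fun J => ∏ i : Fin p, x (fun t => J ⟨(i : ℕ) * m + (t : ℕ), by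
    have h2 : (t : ℕ) < m := t.isLt
    have h1 : (i : ℕ) + 1 ≤ p := i.isLt
    have h3 : ((i : ℕ) + 1) * m = (i : ℕ) * m + m := by ring
    have h4 : ((i : ℕ) + 1) * m ≤ p * m := Nat.mul_le_mul_right m h1
    omega⟩)

/-- The coordinatewise complex conjugate. -/
def conjV {n m : ℕ} (z : Vnm n m) : Vnm n m := WithLp.toLp 2 <| fun J => starRingEnd ℂ (z J)

/-- A unit vector `z` is periodic if `z = x^{⊗p}` for some unit vector `x` and `p ≥ 2`;
it is nonperiodic if it is not periodic. -/
def PeriodicV {n m : ℕ} (z : Vnm n m) : Prop :=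
  ∃ (m' p : ℕ) (x : Vnm n m') (h : p * m' = m),
    ‖x‖ = 1 ∧ 2 ≤ p ∧ castV h (tpowV x p) = z

/-- The matricization of `z ∈ V_{n,b+a}` as an operator `V_{n,a} → V_{n,b}`,
`(T z) e_K = Σ_{|J|=b} z_{JK} e_J`. -/
def matT {n b a : ℕ} (z : Vnm n (b + a)) :
    EuclideanSpace ℂ (Fin a → Fin n) →L[ℂ] EuclideanSpace ℂ (Fin b → Fin n) :=
  LinearMap.toContinuousLinearMap
    (Matrix.toEuclideanLin
      (Matrix.of fun (J : Fin b → Fin n) (K : Fin a → Fin n) => z (Fin.append J K)))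

/-- The matricization `T_a(z) : V_{n,a} → V_{n,m-a}` of `z ∈ V_{n,m}`,
`T_a(z) e_K = Σ_{|J|=m−a} z_{JK} e_J`. -/
def Tmat {n m : ℕ} (a : ℕ) (h : a ≤ m) (z : Vnm n m) :
    EuclideanSpace ℂ (Fin a → Fin n) →L[ℂ] EuclideanSpace ℂ (Fin (m - a) → Fin n) :=
  matT (castV (by omega : m = (m - a) + a) z)

/-- `z` is indecomposable if it is not a tensor product of lower-degree tensors. -/
def IndecomposableV {n m : ℕ} (z : Vnm n m) : Prop :=
  1 ≤ m ∧ ¬ ∃ (a b : ℕ) (h : a + b = m) (x : Vnm n a) (y : Vnm n b),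
    1 ≤ a ∧ 1 ≤ b ∧ castV h (tensV x y) = z

/-- The iterated tensor product `x₁ ⊗ ⋯ ⊗ x_l` of homogeneous tensors of degrees `ms i`. -/
def bigTensV {n l : ℕ} (ms : Fin l → ℕ) (xs : ∀ i, Vnm n (ms i)) : Vnm n (∑ i, ms i) :=
  WithLp.toLp 2 <| fun J => ∏ i : Fin l, xs i (fun t => J ⟨(∑ j ∈ Finset.Iio i, ms j) + (t : ℕ), by
    have h1 : (∑ j ∈ Finset.Iio i, ms j) + ms i ≤ ∑ j, ms j := by
      calc (∑ j ∈ Finset.Iio i, ms j) + ms i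
          = ∑ j ∈ insert i (Finset.Iio i), ms j := by
            rw [Finset.sum_insert (by simp)]; ring
        _ ≤ ∑ j, ms j := Finset.sum_le_sum_of_subset (Finset.subset_univ _)
    have h2 : (t : ℕ) < ms i := t.isLt
    omega⟩)

/-- `z ⊠ y ∈ V_{nn',m}`: `(z ⊠ y)_L = z_J y_K` where `L = J ⊠ K` is given by the
pairing `l_t = n'·j_t + k_t` of `{0,…,n−1}×{0,…,n'−1}` with `{0,…,nn'−1}`. -/
def boxTensV {n n' m : ℕ} (z : Vnm n m) (y : Vnm n' m) : Vnm (n * n') m :=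
  WithLp.toLp 2 <| fun L =>
    z (fun t => ⟨(L t : ℕ) / n', by
        have h := (L t).isLt
        have hn' : 0 < n' := Nat.pos_of_ne_zero (by rintro rfl; simp at h)
        exact (Nat.div_lt_iff_lt_mul hn').mpr h⟩) *
    y (fun t => ⟨(L t : ℕ) % n', by
        have h := (L t).isLt
        have hn' : 0 < n' := Nat.pos_of_ne_zero (by rintro rfl; simp at h)
        exact Nat.mod_lt _ hn'⟩)

/-- `z * y := z^{⊗α} ⊠ y^{⊗β} ∈ V_{nn',d}` where `d = αm = βl` is the lcm of `m` and `l`. -/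
def starV {n n' m l : ℕ} (z : Vnm n m) (y : Vnm n' l) : Vnm (n * n') (Nat.lcm m l) :=
  boxTensV (castV (Nat.div_mul_cancel (Nat.dvd_lcm_left m l)) (tpowV z (Nat.lcm m l / m)))
    (castV (Nat.div_mul_cancel (Nat.dvd_lcm_right m l)) (tpowV y (Nat.lcm m l / l)))

/-- Conjugacy of homogeneous tensors: `z = y`, or `z = x₁ ⊗ x₂` and `y = x₂ ⊗ x₁`
for some unit vectors `x₁, x₂`. -/
def ConjVec {n m l : ℕ} (z : Vnm n m) (y : Vnm n l) : Prop :=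
  (∃ h : m = l, castV h z = y) ∨
    ∃ (a b : ℕ) (x₁ : Vnm n a) (x₂ : Vnm n b) (h₁ : a + b = m) (h₂ : b + a = l),
      ‖x₁‖ = 1 ∧ ‖x₂‖ = 1 ∧ castV h₁ (tensV x₁ x₂) = z ∧ castV h₂ (tensV x₂ x₁) = y

/-- A Cuntz family of order `n` on `H`: `Sᵢ* Sⱼ = δᵢⱼ 1` and `Σᵢ Sᵢ Sᵢ* = 1`. -/
def IsCuntzFamily {H : Type*} [NormedAddCommGroup H] [InnerProductSpace ℂ H]
    [CompleteSpace H] {n : ℕ} (S : Fin n → H →L[ℂ] H) : Prop :=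
  (∀ i j, (ContinuousLinearMap.adjoint (S i)).comp (S j) = if i = j then 1 else 0) ∧
    ∑ i, (S i).comp (ContinuousLinearMap.adjoint (S i)) = 1

/-- `S_J := S_{j₁} ∘ ⋯ ∘ S_{j_k}` for a word `J = (j₁,…,j_k)`, with `S_∅ = 1`. -/
def Sword {H : Type*} [NormedAddCommGroup H] [InnerProductSpace ℂ H]
    {ι : Type*} (S : ι → H →L[ℂ] H) : (k : ℕ) → (Fin k → ι) → (H →L[ℂ] H)
  | 0, _ => 1
  | (k + 1), J => (S (J 0)).comp (Sword S k (fun i => J i.succ))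

/-- `s(z) := Σ_{|J|=m} z_J S_J`. -/
def sop {H : Type*} [NormedAddCommGroup H] [InnerProductSpace ℂ H]
    {n m : ℕ} (S : Fin n → H →L[ℂ] H) (z : Vnm n m) : H →L[ℂ] H :=
  ∑ J : Fin m → Fin n, z J • Sword S m J


/-- if `s(z)Ω = Ω` and the span of `{S_J S_K* Ω}` is dense, then already
the span of `{S_J Ω}` is dense. -/
theorem subCuntz_stmt12 {H : Type*} [NormedAddCommGroup H] [InnerProductSpace ℂ H]
    [CompleteSpace H] {n m : ℕ} (hn : 2 ≤ n) (hm : 1 ≤ m)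
    (S : Fin n → H →L[ℂ] H) (hS : IsCuntzFamily S)
    (z : Vnm n m) (hz : ‖z‖ = 1) (Ω : H) (hΩ : ‖Ω‖ = 1)
    (hfix : sop S z Ω = Ω)
    (hdense : Dense ((Submodule.span ℂ
      {v : H | ∃ (k k' : ℕ) (J : Fin k → Fin n) (K : Fin k' → Fin n),
        v = Sword S k J (ContinuousLinearMap.adjoint (Sword S k' K) Ω)} : Submodule ℂ H)
        : Set H)) :
    Dense ((Submodule.span ℂ
      {v : H | ∃ (k : ℕ) (J : Fin k → Fin n), v = Sword S k J Ω} : Submodule ℂ H)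
        : Set H) := by

  obtain ⟨m', rfl⟩ : ∃ m', m = m' + 1 := ⟨m - 1, by omega⟩
  set M : Submodule ℂ H := Submodule.span ℂ
      {v : H | ∃ (k : ℕ) (J : Fin k → Fin n), v = Sword S k J Ω} with hM
  have hgen : ∀ (k : ℕ) (J : Fin k → Fin n), Sword S k J Ω ∈ M :=
    fun k J => Submodule.subset_span ⟨k, J, rfl⟩
  have hΩM : Ω ∈ M := by
    have := hgen 0 (fun i => i.elim0)
    simpa [Sword] using this
  have hSi : ∀ (i j : Fin n) (x : H), ContinuousLinearMap.adjoint (S i) (S j x)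
      = if i = j then x else 0 := by
    intro i j x
    have h := congrArg (fun T : H →L[ℂ] H => T x) (hS.1 i j)
    simpa [apply_ite (fun T : H →L[ℂ] H => T x)] using h
  have hkey : ∀ (i : Fin n) (k : ℕ) (J : Fin (k+1) → Fin n) (x : H),
      ContinuousLinearMap.adjoint (S i) (Sword S (k+1) J x)
        = if i = J 0 then Sword S k (fun t => J t.succ) x else 0 := by
    intro i k J x
    have h1 : Sword S (k+1) J x = S (J 0) (Sword S k (fun t => J t.succ) x) := rfl
    rw [h1, hSi]
  have hΩeq : Ω = ∑ J : Fin (m'+1) → Fin n, z J • Sword S (m'+1) J Ω := by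
    conv_lhs => rw [← hfix]
    simp [sop]
  have hBgen : ∀ (i : Fin n) (k : ℕ) (J : Fin k → Fin n),
      ContinuousLinearMap.adjoint (S i) (Sword S k J Ω) ∈ M := by
    intro i k J
    match k, J with
    | 0, J =>
      have h0 : Sword S 0 J Ω = Ω := rfl
      rw [h0, hΩeq, map_sum]
      refine Submodule.sum_mem _ fun J' _ => ?_
      rw [map_smul, hkey]
      split_ifs
      · exact Submodule.smul_mem _ _ (hgen _ _)
      · simpa using M.zero_mem
    | (k+1), J =>
      rw [hkey]
      split_ifs
      · exact hgen _ _
      · exact M.zero_mem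
  have hB : ∀ (i : Fin n) (x : H), x ∈ M → ContinuousLinearMap.adjoint (S i) x ∈ M := by
    intro i x hx
    rw [hM] at hx
    refine Submodule.span_induction ?_ ?_ ?_ ?_ hx
    · rintro v ⟨k, J, rfl⟩
      exact hBgen i k J
    · simpa using M.zero_mem
    · intro a b _ _ ha hb
      rw [map_add]; exact M.add_mem ha hb
    · intro c a _ ha
      rw [map_smul]; exact M.smul_mem c ha
  have hA : ∀ (i : Fin n) (x : H), x ∈ M → S i x ∈ M := by
    intro i x hx
    rw [hM] at hx
    refine Submodule.span_induction ?_ ?_ ?_ ?_ hx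
    · rintro v ⟨k, J, rfl⟩
      have he : Sword S (k+1) (Fin.cons i J) Ω = S i (Sword S k J Ω) := by
        simp [Sword]
      rw [← he]; exact hgen _ _
    · simpa using M.zero_mem
    · intro a b _ _ ha hb
      rw [map_add]; exact M.add_mem ha hb
    · intro c a _ ha
      rw [map_smul]; exact M.smul_mem c ha
  have hSwordM : ∀ (k : ℕ) (J : Fin k → Fin n) (x : H), x ∈ M → Sword S k J x ∈ M := by
    intro k
    induction k with
    | zero => intro J x hx; simpa [Sword] using hx
    | succ k ih =>
      intro J x hx
      have h1 : Sword S (k+1) J x = S (J 0) (Sword S k (fun t => J t.succ) x) := rfl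
      rw [h1]
      exact hA _ _ (ih _ _ hx)
  have hadjM : ∀ (k : ℕ) (K : Fin k → Fin n) (x : H), x ∈ M →
      ContinuousLinearMap.adjoint (Sword S k K) x ∈ M := by
    intro k
    induction k with
    | zero =>
      intro K x hx
      have h0 : (Sword S 0 K : H →L[ℂ] H) = ContinuousLinearMap.id ℂ H := rfl
      rw [h0, ContinuousLinearMap.adjoint_id]
      exact hx
    | succ k ih =>
      intro K x hx
      have h1 : (Sword S (k+1) K : H →L[ℂ] H)
          = (S (K 0)).comp (Sword S k (fun t => K t.succ)) := rfl
      rw [h1, ContinuousLinearMap.adjoint_comp]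
      exact ih _ _ (hB _ _ hx)
  have hsub : (Submodule.span ℂ
      {v : H | ∃ (k k' : ℕ) (J : Fin k → Fin n) (K : Fin k' → Fin n),
        v = Sword S k J (ContinuousLinearMap.adjoint (Sword S k' K) Ω)} : Submodule ℂ H)
      ≤ M := by
    rw [Submodule.span_le]
    rintro v ⟨k, k', J, K, rfl⟩
    exact hSwordM k J _ (hadjM k' K Ω hΩM)
  exact hdense.mono hsub
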